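/- Let H be a metric space that is also a topological group (with the metric topology) acting continuously on a second countable locally compact Hausdorff topological space X. Let (h_n) be a sequence in H and (a_n) a sequence of positive real numbers such that for every n the closed ball of radius 2·a_n centered at h_n is compact. Then the set of points x ∈ X at which, for every n, the function y ↦ min(a_n, infDist(h_n, Stab(y))) is continuous, is a dense G_δ subset of X. -/

import Mathlib

open Metric Filter Set Topology

/-- The continuity points of a lower semicontinuous real function form a residual set. -/
lemma lsc_continuousAt_residual {X : Type*} [TopologicalSpace X] {f : X → ℝ}
    (hf : LowerSemicontinuous f) : {x | ContinuousAt f x} ∈ residual X := by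
  have key : ∀ p : ℚ × ℚ, p.1 < p.2 →
      ({y | f y ≤ (p.1 : ℝ)} ∩ closure {y | (p.2 : ℝ) ≤ f y})ᶜ ∈ residual X := by
    intro p hp
    have hcl : IsClosed ({y | f y ≤ (p.1 : ℝ)} ∩ closure {y | (p.2 : ℝ) ≤ f y}) :=
      (hf.isClosed_preimage _).inter isClosed_closure
    refine residual_of_dense_open hcl.isOpen_compl ?_
    rw [← interior_eq_empty_iff_dense_compl, eq_empty_iff_forall_notMem]
    intro x hx
    have hU : interior ({y | f y ≤ (p.1 : ℝ)} ∩ closure {y | (p.2 : ℝ) ≤ f y}) ∈ 𝓝 x :=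
      isOpen_interior.mem_nhds hx
    have hx2 : x ∈ closure {y | (p.2 : ℝ) ≤ f y} := (interior_subset hx).2
    rcases mem_closure_iff_nhds.1 hx2 _ hU with ⟨y, hy1, hy2⟩
    have h1 : f y ≤ (p.1 : ℝ) := (interior_subset hy1).1
    have h2 : (p.2 : ℝ) ≤ (p.1 : ℝ) := le_trans hy2 h1
    exact absurd (by exact_mod_cast h2) (not_le.2 hp)
  have hcnt : (⋂ p ∈ {p : ℚ × ℚ | p.1 < p.2},
      ({y | f y ≤ (p.1 : ℝ)} ∩ closure {y | (p.2 : ℝ) ≤ f y})ᶜ) ∈ residual X :=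
    (countable_bInter_mem (Set.to_countable _)).2 fun p hp => key p hp
  refine mem_of_superset hcnt ?_
  intro x hx
  simp only [mem_iInter, mem_compl_iff, mem_inter_iff, not_and] at hx
  have hub : ∀ b > f x, ∀ᶠ y in 𝓝 x, f y < b := by
    intro b hb
    obtain ⟨q, hq1, hq2⟩ := exists_rat_btwn hb
    obtain ⟨q', hq1', hq2'⟩ := exists_rat_btwn hq1
    have hnot : x ∉ closure {y | (q : ℝ) ≤ f y} := by
      refine hx (q', q) (by exact_mod_cast hq2') ?_
      exact le_of_lt hq1'
    have hopen : (closure {y | (q : ℝ) ≤ f y})ᶜ ∈ 𝓝 x :=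
      isClosed_closure.isOpen_compl.mem_nhds hnot
    filter_upwards [hopen] with y hy
    have : ¬ ((q : ℝ) ≤ f y) := fun hc => hy (subset_closure hc)
    linarith [not_le.1 this]
  have hlb : ∀ b < f x, ∀ᶠ y in 𝓝 x, b < f y := fun b hb => hf x b hb
  exact tendsto_order.2 ⟨hlb, hub⟩

/-- Lower semicontinuity of the truncated distance to the stabilizer. -/
lemma lsc_min_infDist_stab {H X : Type*} [MetricSpace H] [Group H] [IsTopologicalGroup H]
    [TopologicalSpace X] [SecondCountableTopology X] [T2Space X]
    [MulAction H X] [ContinuousSMul H X]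
    (h : H) (a : ℝ) (ha : 0 < a) (hball : IsCompact (Metric.closedBall h (2 * a))) :
    LowerSemicontinuous (fun y : X => min a (Metric.infDist h {k : H | k • y = y})) := by
  intro x c hc
  rcases lt_or_ge c 0 with hc0 | hc0
  · filter_upwards with y
    exact lt_of_lt_of_le hc0 (le_min ha.le (Metric.infDist_nonneg))
  · have hca : c < a := lt_of_lt_of_le hc (min_le_left _ _)
    have hcd : c < Metric.infDist h {k : H | k • x = x} :=
      lt_of_lt_of_le hc (min_le_right _ _)
    set c' : ℝ := min ((c + a) / 2) ((c + Metric.infDist h {k : H | k • x = x}) / 2) with hc'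
    have hcc' : c < c' := lt_min (by linarith) (by linarith)
    have hc'a : c' < a := lt_of_le_of_lt (min_le_left _ _) (by linarith)
    have hc'd : c' < Metric.infDist h {k : H | k • x = x} :=
      lt_of_le_of_lt (min_le_right _ _) (by linarith)
    by_contra hcon
    have hfreq : ∃ᶠ y in 𝓝 x, Metric.infDist h {k : H | k • y = y} ≤ c := by
      rw [Filter.not_eventually] at hcon
      refine hcon.mono fun y hy => ?_
      by_contra hle
      exact hy (lt_min (lt_of_lt_of_le hc (min_le_left _ _)) (not_le.1 hle))
    have hclos : x ∈ closure {y : X | Metric.infDist h {k : H | k • y = y} ≤ c} :=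
      mem_closure_iff_frequently.2 hfreq
    obtain ⟨y, hy, hytend⟩ := mem_closure_iff_seq_limit.1 hclos
    -- For each i, pick k i in the stabilizer of y i close to h
    have hk : ∀ i : ℕ, ∃ k : H, k • y i = y i ∧ dist h k < c' := by
      intro i
      have hne : {k : H | k • y i = y i}.Nonempty := ⟨1, one_smul _ _⟩
      have := (Metric.infDist_lt_iff hne).1 (lt_of_le_of_lt (hy i) hcc')
      obtain ⟨k, hk1, hk2⟩ := this
      exact ⟨k, hk1, hk2⟩
    choose k hk1 hk2 using hk
    have hkball : ∀ i, k i ∈ Metric.closedBall h (2 * a) := by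
      intro i
      rw [Metric.mem_closedBall, dist_comm]
      exact le_trans (hk2 i).le (by linarith)
    obtain ⟨l, hl, φ, hφmono, hφtend⟩ := hball.tendsto_subseq hkball
    -- l stabilizes x
    have hsmul : Filter.Tendsto (fun i => k (φ i) • y (φ i)) atTop (𝓝 (l • x)) :=
      (hφtend.smul (hytend.comp hφmono.tendsto_atTop))
    have hsmul' : Filter.Tendsto (fun i => k (φ i) • y (φ i)) atTop (𝓝 x) := by
      simp only [fun i => hk1 (φ i)]
      exact hytend.comp hφmono.tendsto_atTop
    have hlx : l • x = x := tendsto_nhds_unique hsmul hsmul'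
    have hle : Metric.infDist h {k : H | k • x = x} ≤ dist h l :=
      Metric.infDist_le_dist_of_mem hlx
    have hdl : dist h l ≤ c' := by
      have : Filter.Tendsto (fun i => dist h (k (φ i))) atTop (𝓝 (dist h l)) :=
        (continuous_const.dist continuous_id).continuousAt.tendsto.comp hφtend
      exact le_of_tendsto this (Filter.Eventually.of_forall fun i => (hk2 (φ i)).le)
    linarith

/-- Lemma 2 in the transformation-group case: for a metric group `H` acting
continuously on a second countable locally compact Hausdorff space `X`, and sequences
`(h n)` in `H` and `(a n)` of positive reals with the closed ball of radius `2 * a n`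
around `h n` compact, the set of simultaneous continuity points of all the functions
`y ↦ min (a n) (infDist (h n) (Stab y))` is a dense `Gδ`. -/
theorem stmt_5 {H X : Type*} [MetricSpace H] [Group H] [IsTopologicalGroup H]
    [TopologicalSpace X] [SecondCountableTopology X] [LocallyCompactSpace X] [T2Space X]
    [MulAction H X] [ContinuousSMul H X]
    (h : ℕ → H) (a : ℕ → ℝ) (ha : ∀ n, 0 < a n)
    (hball : ∀ n, IsCompact (Metric.closedBall (h n) (2 * a n))) :
    Dense {x : X | ∀ n : ℕ,
        ContinuousAt (fun y : X => min (a n) (Metric.infDist (h n) {k : H | k • y = y})) x} ∧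
    IsGδ {x : X | ∀ n : ℕ,
        ContinuousAt (fun y : X => min (a n) (Metric.infDist (h n) {k : H | k • y = y})) x} := by
  have hset : {x : X | ∀ n : ℕ,
      ContinuousAt (fun y : X => min (a n) (Metric.infDist (h n) {k : H | k • y = y})) x}
      = ⋂ n : ℕ, {x : X |
        ContinuousAt (fun y : X => min (a n) (Metric.infDist (h n) {k : H | k • y = y})) x} := by
    ext x; simp
  constructor
  · refine dense_of_mem_residual ?_
    rw [hset]
    exact countable_iInter_mem.2 fun n =>
      lsc_continuousAt_residual (lsc_min_infDist_stab (h n) (a n) (ha n) (hball n))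
  · rw [hset]
    exact IsGδ.iInter fun n => IsGδ.setOf_continuousAt _
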